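/- Let M ≥ 8 be a power of 2, θ = π/M, and S₁ the M-th roots of unity, S₂ = e^{iθ}S₁. Let S₁ = A₁ ∪ A₂ and S₂ = B₁ ∪ B₂ be any partitions into two sets of size M/2 each. If some part, say A₁, contains two adjacent points e^{i2πa/M} and e^{i2π(a+1)/M}, then at least one of the four sumsets Aᵢ + Bⱼ contains two distinct points whose Euclidean distance is strictly less than 4 sin(π/(2M)) sin(2π/M). -/

import Mathlib

open Real

set_option synthInstance.maxSize 2000 in
set_option maxHeartbeats 1000000 in
lemma pigeon4 (a b c d e : Bool × Bool) (hab : a ≠ b) (hac : a ≠ c) (had : a ≠ d)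
    (hbc : b ≠ c) (hbd : b ≠ d) (hcd : c ≠ d)
    (heb : e ≠ b) (hec : e ≠ c) (hed : e ≠ d) : e = a := by
  revert hab hac had hbc hbd hcd heb hec hed
  revert a b c d e
  decide

lemma abs_one_sub_exp (θ : ℝ) (h0 : 0 ≤ θ) (h1 : θ ≤ π) :
    ‖1 - Complex.exp (Complex.I * (θ:ℂ))‖ = 2 * Real.sin (θ/2) := by
  have key : 1 - Complex.exp (Complex.I * (θ:ℂ)) =
      Complex.exp (Complex.I * ((θ:ℂ)/2)) * (-(2 * Complex.sin ((θ:ℂ)/2) * Complex.I)) := by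
    have e3 : Complex.exp (-(Complex.I*((θ:ℂ)/2))) - Complex.exp (Complex.I*((θ:ℂ)/2))
        = -(2*Complex.sin ((θ:ℂ)/2)*Complex.I) := by
      rw [show -(Complex.I*((θ:ℂ)/2)) = (-((θ:ℂ)/2))*Complex.I from by ring,
        show Complex.I*((θ:ℂ)/2) = ((θ:ℂ)/2)*Complex.I from by ring,
        Complex.exp_mul_I, Complex.exp_mul_I, Complex.cos_neg, Complex.sin_neg]
      ring
    rw [← e3, mul_sub, ← Complex.exp_add, ← Complex.exp_add,
      show Complex.I*((θ:ℂ)/2) + -(Complex.I*((θ:ℂ)/2)) = 0 from by ring,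
      show Complex.I*((θ:ℂ)/2) + Complex.I*((θ:ℂ)/2) = Complex.I*(θ:ℂ) from by ring,
      Complex.exp_zero]
  have hsin : Complex.sin ((θ:ℂ)/2) = ((Real.sin (θ/2) : ℝ) : ℂ) := by
    rw [Complex.ofReal_sin]; push_cast; ring_nf
  have hre : (Complex.I * ((θ:ℂ)/2)).re = 0 := by simp
  have hnn : 0 ≤ Real.sin (θ/2) :=
    Real.sin_nonneg_of_nonneg_of_le_pi (by linarith) (by linarith)
  rw [key, norm_mul, Complex.norm_exp, hre, Real.exp_zero, one_mul, hsin]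
  rw [show -(2 * ((Real.sin (θ/2):ℝ):ℂ) * Complex.I) = ((-(2 * Real.sin (θ/2)) : ℝ):ℂ) * Complex.I from by push_cast; ring]
  rw [norm_mul, Complex.norm_I, mul_one, Complex.norm_real, Real.norm_eq_abs, abs_neg,
    abs_of_nonneg (by linarith)]

set_option maxHeartbeats 1000000 in
/-- Optimality of Ungerboeck partitioning for `θ = π/M`: if `S₁` (the `M`-th
roots of unity) and `S₂ = e^{iθ}S₁` are each partitioned into two sets of size
`M/2`, and some part `A₁` contains two adjacent points `e^{i2πa/M}` and
`e^{i2π(a+1)/M}`, then one of the four sumsets `Aᵢ + Bⱼ` contains two distinct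
points at distance strictly less than `4 sin(π/(2M)) sin(2π/M)`. -/
theorem stmt_14 (M : ℕ) (hM : 8 ≤ M) (hpow : ∃ r : ℕ, M = 2 ^ r)
    (A₁ A₂ B₁ B₂ : Finset ℂ)
    (hA : A₁ ∪ A₂ = (Finset.range M).image
      (fun n : ℕ => Complex.exp (Complex.I * (2 * π * n / M : ℝ))))
    (hAdisj : Disjoint A₁ A₂) (hA₁ : A₁.card = M / 2) (hA₂ : A₂.card = M / 2)
    (hB : B₁ ∪ B₂ = (Finset.range M).image
      (fun n : ℕ => Complex.exp (Complex.I * (2 * π * n / M + π / M : ℝ))))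
    (hBdisj : Disjoint B₁ B₂) (hB₁ : B₁.card = M / 2) (hB₂ : B₂.card = M / 2)
    (a : ℕ)
    (ha1 : Complex.exp (Complex.I * (2 * π * a / M : ℝ)) ∈ A₁)
    (ha2 : Complex.exp (Complex.I * (2 * π * (a + 1) / M : ℝ)) ∈ A₁) :
    ∃ A B : Finset ℂ, (A = A₁ ∨ A = A₂) ∧ (B = B₁ ∨ B = B₂) ∧
      ∃ x ∈ A, ∃ y ∈ B, ∃ x' ∈ A, ∃ y' ∈ B,
        x + y ≠ x' + y' ∧
        ‖(x + y) - (x' + y')‖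
          < 4 * Real.sin (π / (2 * M)) * Real.sin (2 * π / M) := by
  classical
  by_contra hcon
  push_neg at hcon
  -- basic facts
  have hM0 : 0 < M := by omega
  have hMR : (0:ℝ) < (M:ℝ) := by exact_mod_cast hM0
  have hMR8 : (8:ℝ) ≤ (M:ℝ) := by exact_mod_cast hM
  obtain ⟨H, hH⟩ : ∃ H, M = 2 * H := by
    obtain ⟨r, rfl⟩ := hpow
    have hr : 1 ≤ r := by
      by_contra h
      interval_cases r <;> omega
    exact ⟨2 ^ (r-1), by rw [← pow_succ']; congr 1; omega⟩
  -- omega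
  set ω : ℂ := Complex.exp (Complex.I * ((π / M : ℝ) : ℂ)) with hω
  have hωM : ω ^ M = -1 := by
    have hMC : (M:ℂ) ≠ 0 := by exact_mod_cast hM0.ne'
    rw [hω, ← Complex.exp_nat_mul]
    rw [show (M:ℂ) * (Complex.I * ((π / M : ℝ) : ℂ)) = (π:ℂ) * Complex.I from by
      push_cast; field_simp]
    exact Complex.exp_pi_mul_I
  have hω2M : ω ^ (2*M) = 1 := by
    rw [pow_mul']; rw [hωM]; norm_num
  have hX : ∀ n : ℕ, Complex.exp (Complex.I * ((2 * π * n / M : ℝ) : ℂ)) = ω ^ (2*n) := by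
    intro n
    rw [hω, ← Complex.exp_nat_mul]
    congr 1
    push_cast
    field_simp
  have hY : ∀ n : ℕ, Complex.exp (Complex.I * ((2 * π * n / M + π / M : ℝ) : ℂ)) = ω ^ (2*n+1) := by
    intro n
    rw [hω, ← Complex.exp_nat_mul]
    congr 1
    push_cast
    field_simp
  have hmod : ∀ n : ℕ, ω ^ (2*(n % M)) = ω ^ (2*n) := by
    intro n
    have h1 : ω ^ ((2*M)*(n/M)) = 1 := by rw [pow_mul, hω2M, one_pow]
    conv_rhs => rw [show 2*n = 2*(n % M) + (2*M)*(n/M) from by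
      calc 2*n = 2*(n % M + M * (n/M)) := by rw [Nat.mod_add_div]
      _ = 2*(n % M) + (2*M)*(n/M) := by ring]
    rw [pow_add, h1, mul_one]
  have hmemA : ∀ n : ℕ, ω ^ (2*n) ∈ A₁ ∪ A₂ := by
    intro n
    rw [hA, Finset.mem_image]
    exact ⟨n % M, Finset.mem_range.2 (Nat.mod_lt n hM0), by rw [hX, hmod]⟩
  have hmemB : ∀ n : ℕ, ω ^ (2*n+1) ∈ B₁ ∪ B₂ := by
    intro n
    rw [hB, Finset.mem_image]
    refine ⟨n % M, Finset.mem_range.2 (Nat.mod_lt n hM0), ?_⟩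
    rw [hY]
    have := hmod n
    rw [pow_add, pow_add, this]
  -- colouring
  set α : ℕ → Bool := fun n => decide (ω ^ (2*n) ∈ A₁) with hαdef
  set β : ℕ → Bool := fun n => decide (ω ^ (2*n+1) ∈ B₁) with hβdef
  -- main geometric estimate
  have hsinpos : 0 < Real.sin (π / (2*M)) := by
    apply Real.sin_pos_of_pos_of_lt_pi (by positivity)
    rw [div_lt_iff₀ (by linarith)]
    nlinarith [pi_pos]
  have GEO : ∀ i i' : ℕ, i < i' → i' ≤ i + 3 →
      ((1-ω) * ω^i ≠ (1-ω) * ω^i') ∧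
      ‖(1-ω) * ω^i - (1-ω) * ω^i'‖
        < 4 * Real.sin (π / (2 * M)) * Real.sin (2 * π / M) := by
    intro i i' hlt hle
    obtain ⟨d, rfl⟩ : ∃ d, i' = i + d := ⟨i' - i, by omega⟩
    have hd1 : 1 ≤ d := by omega
    have hd3 : d ≤ 3 := by omega
    have hfac : (1-ω) * ω^i - (1-ω) * ω^(i+d) = ω^i * ((1-ω) * (1 - ω^d)) := by
      rw [pow_add]; ring
    have habsω : ‖ω^i‖ = 1 := by
      rw [hω, ← Complex.exp_nat_mul, Complex.norm_exp]
      rw [show ((i:ℂ) * (Complex.I * ((π / M : ℝ) : ℂ))).re = 0 from by simp]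
      exact Real.exp_zero
    have habs1 : ‖1 - ω‖ = 2 * Real.sin (π / (2*M)) := by
      rw [hω, abs_one_sub_exp (π/M) (by positivity) (by
        rw [div_le_iff₀ hMR]; nlinarith [pi_pos])]
      rw [show π / M / 2 = π / (2*M) from by ring]
    have hωd : ω^d = Complex.exp (Complex.I * ((d * π / M : ℝ) : ℂ)) := by
      rw [hω, ← Complex.exp_nat_mul]
      congr 1
      push_cast
      ring
    have habsd : ‖1 - ω^d‖ = 2 * Real.sin (d * π / (2*M)) := by
      rw [hωd, abs_one_sub_exp (d*π/M) (by positivity) (by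
        rw [div_le_iff₀ hMR]
        have : (d:ℝ) ≤ 3 := by exact_mod_cast hd3
        nlinarith [pi_pos])]
      rw [show d * π / M / 2 = d * π / (2*M) from by ring]
    have hdR1 : (1:ℝ) ≤ (d:ℝ) := by exact_mod_cast hd1
    have hdR3 : (d:ℝ) ≤ 3 := by exact_mod_cast hd3
    have hsind : 0 < Real.sin (d * π / (2*M)) := by
      apply Real.sin_pos_of_pos_of_lt_pi (by positivity)
      rw [div_lt_iff₀ (by linarith)]
      nlinarith [pi_pos]
    have habseq : ‖(1-ω) * ω^i - (1-ω) * ω^(i+d)‖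
        = (2 * Real.sin (π / (2*M))) * (2 * Real.sin (d * π / (2*M))) := by
      rw [hfac, norm_mul, habsω, one_mul, norm_mul, habs1, habsd]
    constructor
    · intro h
      have h0 : ((1-ω)*ω^i - (1-ω)*ω^(i+d)) = 0 := sub_eq_zero.mpr h
      rw [h0] at habseq
      simp at habseq
      rcases habseq with h'|h' <;> linarith
    · rw [habseq]
      have harg1 : -(π/2) ≤ (d:ℝ) * π / (2*(M:ℝ)) := by
        have h0 : (0:ℝ) ≤ (d:ℝ) * π / (2*(M:ℝ)) := by positivity
        linarith [pi_pos]
      have harg2 : 2 * π / (M:ℝ) ≤ π / 2 := by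
        rw [div_le_div_iff₀ (by linarith) (by norm_num : (0:ℝ) < 2)]
        nlinarith [pi_pos]
      have harg3 : (d:ℝ) * π / (2*(M:ℝ)) < 2 * π / (M:ℝ) := by
        rw [div_lt_div_iff₀ (by linarith) (by linarith)]
        nlinarith [mul_pos pi_pos hMR]
      have hlt2 := Real.sin_lt_sin_of_lt_of_le_pi_div_two harg1 harg2 harg3
      nlinarith [mul_lt_mul_of_pos_left hlt2 hsinpos]
  have KD : ∀ p q p' q' : ℕ, α p = α p' → β q = β q' →
      (ω^(2*p) + ω^(2*q+1)) ≠ (ω^(2*p') + ω^(2*q'+1)) →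
      ‖(ω^(2*p) + ω^(2*q+1)) - (ω^(2*p') + ω^(2*q'+1))‖
        < 4 * Real.sin (π / (2 * M)) * Real.sin (2 * π / M) → False := by
    intro p q p' q' hαe hβe hne hltd
    have hxA : ∀ n : ℕ, α n = true → ω^(2*n) ∈ A₁ := by
      intro n h; exact of_decide_eq_true h
    have hxA' : ∀ n : ℕ, α n = false → ω^(2*n) ∈ A₂ := by
      intro n h
      have hn : ¬ (ω^(2*n) ∈ A₁) := of_decide_eq_false h
      rcases Finset.mem_union.mp (hmemA n) with h'|h'
      · exact absurd h' hn
      · exact h'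
    have hyB : ∀ n : ℕ, β n = true → ω^(2*n+1) ∈ B₁ := by
      intro n h; exact of_decide_eq_true h
    have hyB' : ∀ n : ℕ, β n = false → ω^(2*n+1) ∈ B₂ := by
      intro n h
      have hn : ¬ (ω^(2*n+1) ∈ B₁) := of_decide_eq_false h
      rcases Finset.mem_union.mp (hmemB n) with h'|h'
      · exact absurd h' hn
      · exact h'
    have hApart : ∃ A, (A = A₁ ∨ A = A₂) ∧ ω^(2*p) ∈ A ∧ ω^(2*p') ∈ A := by
      cases hv : α p with
      | false =>
        have hv' : α p' = false := by rw [← hαe]; exact hv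
        exact ⟨A₂, Or.inr rfl, hxA' p hv, hxA' p' hv'⟩
      | true =>
        have hv' : α p' = true := by rw [← hαe]; exact hv
        exact ⟨A₁, Or.inl rfl, hxA p hv, hxA p' hv'⟩
    have hBpart : ∃ B, (B = B₁ ∨ B = B₂) ∧ ω^(2*q+1) ∈ B ∧ ω^(2*q'+1) ∈ B := by
      cases hv : β q with
      | false =>
        have hv' : β q' = false := by rw [← hβe]; exact hv
        exact ⟨B₂, Or.inr rfl, hyB' q hv, hyB' q' hv'⟩
      | true =>
        have hv' : β q' = true := by rw [← hβe]; exact hv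
        exact ⟨B₁, Or.inl rfl, hyB q hv, hyB q' hv'⟩
    obtain ⟨A, hAor, hx, hx'⟩ := hApart
    obtain ⟨B, hBor, hy, hy'⟩ := hBpart
    exact absurd (hcon A B hAor hBor _ hx _ hy _ hx' _ hy' hne) (not_le.mpr hltd)
  have DEC1 : ∀ j : ℕ, ω^(2*j) + ω^(2*(j+H)+1) = (1-ω) * ω^(2*j) := by
    intro j
    rw [show 2*(j+H)+1 = 2*j + M + 1 from by omega, pow_add, pow_add, hωM, pow_one]
    ring
  have DEC2 : ∀ j : ℕ, ω^(2*(j+1+H)) + ω^(2*j+1) = (1-ω) * ω^(2*j+1) := by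
    intro j
    rw [show 2*(j+1+H) = (2*j+1) + M + 1 from by omega, pow_add, pow_add, hωM, pow_one]
    ring
  have step : ∀ j : ℕ, α (j+2) = α j := by
    intro j
    have h01 : ((α j, β (j+H)) : Bool × Bool) ≠ (α (j+1+H), β j) := fun h =>
      KD j (j+H) (j+1+H) j (congrArg Prod.fst h) (congrArg Prod.snd h)
        (by rw [DEC1 j, DEC2 j]; exact (GEO (2*j) (2*j+1) (by omega) (by omega)).1)
        (by rw [DEC1 j, DEC2 j]; exact (GEO (2*j) (2*j+1) (by omega) (by omega)).2)
    have h02 : ((α j, β (j+H)) : Bool × Bool) ≠ (α (j+1), β (j+1+H)) := fun h =>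
      KD j (j+H) (j+1) (j+1+H) (congrArg Prod.fst h) (congrArg Prod.snd h)
        (by rw [DEC1 j, DEC1 (j+1)]; exact (GEO (2*j) (2*(j+1)) (by omega) (by omega)).1)
        (by rw [DEC1 j, DEC1 (j+1)]; exact (GEO (2*j) (2*(j+1)) (by omega) (by omega)).2)
    have h03 : ((α j, β (j+H)) : Bool × Bool) ≠ (α (j+2+H), β (j+1)) := fun h =>
      KD j (j+H) (j+2+H) (j+1) (congrArg Prod.fst h) (congrArg Prod.snd h)
        (by rw [DEC1 j, show j+2+H = (j+1)+1+H from by omega, DEC2 (j+1)];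
            exact (GEO (2*j) (2*(j+1)+1) (by omega) (by omega)).1)
        (by rw [DEC1 j, show j+2+H = (j+1)+1+H from by omega, DEC2 (j+1)];
            exact (GEO (2*j) (2*(j+1)+1) (by omega) (by omega)).2)
    have h12 : ((α (j+1+H), β j) : Bool × Bool) ≠ (α (j+1), β (j+1+H)) := fun h =>
      KD (j+1+H) j (j+1) (j+1+H) (congrArg Prod.fst h) (congrArg Prod.snd h)
        (by rw [DEC2 j, DEC1 (j+1)]; exact (GEO (2*j+1) (2*(j+1)) (by omega) (by omega)).1)
        (by rw [DEC2 j, DEC1 (j+1)]; exact (GEO (2*j+1) (2*(j+1)) (by omega) (by omega)).2)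
    have h13 : ((α (j+1+H), β j) : Bool × Bool) ≠ (α (j+2+H), β (j+1)) := fun h =>
      KD (j+1+H) j (j+2+H) (j+1) (congrArg Prod.fst h) (congrArg Prod.snd h)
        (by rw [DEC2 j, show j+2+H = (j+1)+1+H from by omega, DEC2 (j+1)];
            exact (GEO (2*j+1) (2*(j+1)+1) (by omega) (by omega)).1)
        (by rw [DEC2 j, show j+2+H = (j+1)+1+H from by omega, DEC2 (j+1)];
            exact (GEO (2*j+1) (2*(j+1)+1) (by omega) (by omega)).2)
    have h14 : ((α (j+1+H), β j) : Bool × Bool) ≠ (α (j+2), β (j+2+H)) := fun h =>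
      KD (j+1+H) j (j+2) (j+2+H) (congrArg Prod.fst h) (congrArg Prod.snd h)
        (by rw [DEC2 j, DEC1 (j+2)]; exact (GEO (2*j+1) (2*(j+2)) (by omega) (by omega)).1)
        (by rw [DEC2 j, DEC1 (j+2)]; exact (GEO (2*j+1) (2*(j+2)) (by omega) (by omega)).2)
    have h23 : ((α (j+1), β (j+1+H)) : Bool × Bool) ≠ (α (j+2+H), β (j+1)) := fun h =>
      KD (j+1) (j+1+H) (j+2+H) (j+1) (congrArg Prod.fst h) (congrArg Prod.snd h)
        (by rw [DEC1 (j+1), show j+2+H = (j+1)+1+H from by omega, DEC2 (j+1)];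
            exact (GEO (2*(j+1)) (2*(j+1)+1) (by omega) (by omega)).1)
        (by rw [DEC1 (j+1), show j+2+H = (j+1)+1+H from by omega, DEC2 (j+1)];
            exact (GEO (2*(j+1)) (2*(j+1)+1) (by omega) (by omega)).2)
    have h24 : ((α (j+1), β (j+1+H)) : Bool × Bool) ≠ (α (j+2), β (j+2+H)) := fun h =>
      KD (j+1) (j+1+H) (j+2) (j+2+H) (congrArg Prod.fst h) (congrArg Prod.snd h)
        (by rw [DEC1 (j+1), DEC1 (j+2)]; exact (GEO (2*(j+1)) (2*(j+2)) (by omega) (by omega)).1)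
        (by rw [DEC1 (j+1), DEC1 (j+2)]; exact (GEO (2*(j+1)) (2*(j+2)) (by omega) (by omega)).2)
    have h34 : ((α (j+2+H), β (j+1)) : Bool × Bool) ≠ (α (j+2), β (j+2+H)) := fun h =>
      KD (j+2+H) (j+1) (j+2) (j+2+H) (congrArg Prod.fst h) (congrArg Prod.snd h)
        (by rw [show j+2+H = (j+1)+1+H from by omega, DEC2 (j+1), DEC1 (j+2)];
            exact (GEO (2*(j+1)+1) (2*(j+2)) (by omega) (by omega)).1)
        (by rw [show j+2+H = (j+1)+1+H from by omega, DEC2 (j+1), DEC1 (j+2)];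
            exact (GEO (2*(j+1)+1) (2*(j+2)) (by omega) (by omega)).2)
    have hC40 := pigeon4 (α j, β (j+H)) (α (j+1+H), β j) (α (j+1), β (j+1+H))
      (α (j+2+H), β (j+1)) (α (j+2), β (j+2+H))
      h01 h02 h03 h12 h13 h23 h14.symm h24.symm h34.symm
    exact congrArg Prod.fst hC40
  have αa : α a = true := by
    have : ω^(2*a) ∈ A₁ := by rw [← hX a]; exact ha1
    exact decide_eq_true this
  have αa1 : α (a+1) = true := by
    have heq : Complex.exp (Complex.I * ((2 * π * (a:ℝ) / M + 2 * π / M : ℝ) : ℂ)) =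
        Complex.exp (Complex.I * ((2 * π * ((a:ℕ)+1 : ℕ) / M : ℝ) : ℂ)) := by
      congr 2
      push_cast
      field_simp
    have : ω^(2*(a+1)) ∈ A₁ := by
      rw [← hX (a+1), ← heq]
      convert ha2 using 3
      push_cast
      field_simp
    exact decide_eq_true this
  have αall : ∀ k : ℕ, α (a + k) = true := by
    have pair : ∀ k : ℕ, α (a+k) = true ∧ α (a+k+1) = true := by
      intro k
      induction k with
      | zero => exact ⟨αa, αa1⟩
      | succ n ih =>
        refine ⟨ih.2, ?_⟩
        have hs := step (a+n)
        rw [show a+(n+1)+1 = (a+n)+2 from by omega, hs]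
        exact ih.1
    exact fun k => (pair k).1
  have hA2ne : A₂.Nonempty := Finset.card_pos.mp (by rw [hA₂]; omega)
  obtain ⟨z, hz⟩ := hA2ne
  have hzU : z ∈ A₁ ∪ A₂ := Finset.mem_union_right _ hz
  rw [hA, Finset.mem_image] at hzU
  obtain ⟨n, _hn, hzn⟩ := hzU
  have hz1 : z = ω^(2*n) := by rw [← hX n, ← hzn]
  have hαn : α n = true := by
    have e1 : α (n + a*M) = true := by
      have ha' : a ≤ a*M := Nat.le_mul_of_pos_right a hM0
      rw [show n + a*M = a + (n + a*M - a) from by omega]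
      exact αall _
    have e2 : α (n + a*M) = α n := by
      have hpow' : ω^(2*(n + a*M)) = ω^(2*n) := by
        have h1 : ω^((2*M)*a) = 1 := by rw [pow_mul, hω2M, one_pow]
        rw [show 2*(n+a*M) = 2*n + (2*M)*a from by ring, pow_add, h1, mul_one]
      simp only [hαdef]
      rw [hpow']
    rw [← e2, e1]
  have hzA1 : z ∈ A₁ := by rw [hz1]; exact of_decide_eq_true hαn
  exact (Finset.disjoint_left.mp hAdisj hzA1) hz
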